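/- Consider the parity game constructed for fair alternating simulation. If a play starting from ⟨w,w'⟩ satisfies the three-priority parity objective for player 2, then the corresponding runs w̄ = w0,w1,w2,… in K and w̄' = w0',w1',w2',… in K' satisfy: if w̄ is fair (visits F infinitely often) then w̄' is fair (visits F' infinitely often), and L(w_i) = L'(w_i') for all i ≥ 0. -/

import Mathlib

/-- A labeled alternating transition system (ATS). -/
structure ATS (Obs W A1 A2 : Type*) where
  init : W
  P1 : W → Set A1
  P2 : W → Set A2
  P1_nonempty : ∀ w, (P1 w).Nonempty
  P2_nonempty : ∀ w, (P2 w).Nonempty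
  L : W → Obs
  δ : W → A1 → A2 → W

variable {Obs W A1 A2 W' A1' A2' : Type*}

/-- `Succ(w,a) = { δ(w,a,b) | b ∈ P2(w) }`. -/
def SuccSet (K : ATS Obs W A1 A2) (w : W) (a : A1) : Set W :=
  (fun b => K.δ w a b) '' K.P2 w

/-- `Succ(K) = { Succ(w,a) | w ∈ W, a ∈ P1(w) }`. -/
def SuccSets (K : ATS Obs W A1 A2) : Set (Set W) :=
  {T | ∃ w, ∃ a ∈ K.P1 w, T = SuccSet K w a}

/-- Vertices of the parity game for fair alternating simulation:
`pair w w'` is `⟨w,w'⟩` (only used with `L(w) = L'(w')`); `spair T T'` is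
`⟨T,T'⟩`; `mid T w' t` is `⟨T,w',#⟩` for `t = false` and `⟨T,w',$⟩` for
`t = true`; `frown` is the absorbing sink `⌢`. -/
inductive FVtx (W W' : Type*) where
  | pair : W → W' → FVtx W W'
  | spair : Set W → Set W' → FVtx W W'
  | mid : Set W → W' → Bool → FVtx W W'
  | frown : FVtx W W'

/-- Edges `E = E1 ∪ E2 ∪ E3 ∪ E4¹ ∪ E4² ∪ E5` of the parity game. -/
inductive FEdge (K : ATS Obs W A1 A2) (K' : ATS Obs W' A1' A2') :
    FVtx W W' → FVtx W W' → Prop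
  | e1 {w : W} {w' : W'} {a : A1} (hL : K.L w = K'.L w') (ha : a ∈ K.P1 w) :
      FEdge K K' (.pair w w') (.mid (SuccSet K w a) w' false)
  | e2 {T : Set W} {w' : W'} {a' : A1'} (hT : T ∈ SuccSets K)
      (ha' : a' ∈ K'.P1 w') :
      FEdge K K' (.mid T w' false) (.spair T (SuccSet K' w' a'))
  | e3 {T : Set W} {T' : Set W'} {r' : W'} (hT : T ∈ SuccSets K)
      (hT' : T' ∈ SuccSets K') (hr' : r' ∈ T') :
      FEdge K K' (.spair T T') (.mid T r' true)
  | e4a {T : Set W} {r' : W'} {r : W} (hT : T ∈ SuccSets K) (hr : r ∈ T)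
      (hL : K.L r = K'.L r') :
      FEdge K K' (.mid T r' true) (.pair r r')
  | e4b {T : Set W} {r' : W'} (hT : T ∈ SuccSets K)
      (hno : ∀ r ∈ T, K.L r ≠ K'.L r') :
      FEdge K K' (.mid T r' true) .frown
  | e5 : FEdge K K' .frown .frown

open Classical in
/-- The three-priority priority function: priority `0` on `(W × F') ∩ V1`,
priority `1` on `((F × W' \ W × F') ∩ V1) ∪ {⌢}`, priority `2` elsewhere. -/
noncomputable def prio (F : Set W) (F' : Set W') : FVtx W W' → ℕ
  | .pair w w' => if w' ∈ F' then 0 else if w ∈ F then 1 else 2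
  | .frown => 1
  | _ => 2

/-- Vertices occurring infinitely often in the play `f`. -/
def InfinitelyOften {α : Type*} (f : ℕ → α) : Set α :=
  {v | ∀ N, ∃ n ≥ N, f n = v}

/-- The parity objective for priority function `p`: the minimum priority
visited infinitely often is even. -/
def ParitySat {α : Type*} (p : α → ℕ) (f : ℕ → α) : Prop :=
  (InfinitelyOften f ∩ p ⁻¹' {0}).Nonempty ∨ InfinitelyOften f ∩ p ⁻¹' {1} = ∅

/-- A run is fair iff it visits the fairness set infinitely often. -/
def FairRun {X : Type*} (F : Set X) (ρ : ℕ → X) : Prop :=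
  ∀ N, ∃ n ≥ N, ρ n ∈ F

/-- The play `⟨w₀,w₀'⟩, ⟨T₀,w₀',#⟩, ⟨T₀,T₀'⟩, ⟨T₀,w₁',$⟩, ⟨w₁,w₁'⟩, …`
determined by the runs `w̄`, `w̄'` and the successor-set sequences. -/
def playOf (wseq : ℕ → W) (w'seq : ℕ → W') (Tseq : ℕ → Set W)
    (T'seq : ℕ → Set W') : ℕ → FVtx W W' := fun n =>
  match n % 4 with
  | 0 => .pair (wseq (n / 4)) (w'seq (n / 4))
  | 1 => .mid (Tseq (n / 4)) (w'seq (n / 4)) false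
  | 2 => .spair (Tseq (n / 4)) (T'seq (n / 4))
  | _ => .mid (Tseq (n / 4)) (w'seq (n / 4 + 1)) true

/-- If a play of the fair-alternating-simulation parity game satisfies the
parity objective for player 2, then the corresponding runs `w̄` in `K` and
`w̄'` in `K'` satisfy: if `w̄` is fair then `w̄'` is fair, and
`L(wᵢ) = L'(wᵢ')` for all `i`. -/
theorem parity_play_correspondence
    [Fintype W] [Fintype W']
    (K : ATS Obs W A1 A2) (K' : ATS Obs W' A1' A2')
    (F : Set W) (F' : Set W')
    (wseq : ℕ → W) (w'seq : ℕ → W') (Tseq : ℕ → Set W) (T'seq : ℕ → Set W')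
    (hplay : ∀ n, FEdge K K' (playOf wseq w'seq Tseq T'seq n)
      (playOf wseq w'seq Tseq T'seq (n + 1)))
    (hpar : ParitySat (prio F F') (playOf wseq w'seq Tseq T'seq)) :
    (FairRun F wseq → FairRun F' w'seq) ∧
    ∀ i, K.L (wseq i) = K'.L (w'seq i) := by
  classical
  -- label correspondence
  have hlab : ∀ i, K.L (wseq i) = K'.L (w'seq i) := by
    intro i
    have h := hplay (4 * i)
    have h0 : playOf wseq w'seq Tseq T'seq (4 * i) = FVtx.pair (wseq i) (w'seq i) := by
      simp [playOf, Nat.mul_mod_right, Nat.mul_div_cancel_left]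
    have h1 : playOf wseq w'seq Tseq T'seq (4 * i + 1)
        = FVtx.mid (Tseq i) (w'seq i) false := by
      have hm : (4 * i + 1) % 4 = 1 := by omega
      have hd : (4 * i + 1) / 4 = i := by omega
      simp [playOf, hm, hd]
    rw [h0, h1] at h
    generalize Tseq i = T at h
    cases h with
    | e1 hL ha => exact hL
  refine ⟨?_, hlab⟩
  intro hfair N
  rcases hpar with ⟨v, hv, hp0⟩ | hemp
  · -- a priority-0 vertex occurs infinitely often: it is pair w w' with w' ∈ F'
    simp only [Set.mem_preimage, Set.mem_singleton_iff] at hp0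
    match v, hp0 with
    | FVtx.pair w w', hp0 =>
      have hw' : w' ∈ F' := by
        by_contra hc
        simp [prio, hc] at hp0
        split at hp0 <;> omega
      obtain ⟨n, hn, he⟩ := hv (4 * N)
      have h4 : n % 4 < 4 := Nat.mod_lt _ (by norm_num)
      have hmod : n % 4 = 0 := by
        interval_cases h : (n % 4) <;> simp [playOf, h] at he ⊢
      have he' : wseq (n / 4) = w ∧ w'seq (n / 4) = w' := by
        simp [playOf, hmod] at he; exact he
      exact ⟨n / 4, by omega, he'.2 ▸ hw'⟩
  · -- no priority-1 vertex occurs infinitely often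
    by_contra hc
    push_neg at hc
    -- the set of indices i ≥ N with wseq i ∈ F is infinite
    set S : Set ℕ := {i | N ≤ i ∧ wseq i ∈ F} with hS
    have hSinf : S.Infinite := by
      apply Set.infinite_of_forall_exists_gt
      intro a
      obtain ⟨n, hn, hnF⟩ := hfair (max N a + 1)
      exact ⟨n, ⟨by omega, hnF⟩, by omega⟩
    have hfib : ∃ p : W × W', {i | i ∈ S ∧ (wseq i, w'seq i) = p}.Infinite := by
      by_contra h
      push_neg at h
      apply hSinf
      have hsub : S ⊆ ⋃ p ∈ (Finset.univ : Finset (W × W')),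
          {i | i ∈ S ∧ (wseq i, w'seq i) = p} := by
        intro i hi
        exact Set.mem_biUnion (Finset.mem_univ _) ⟨hi, rfl⟩
      exact Set.Finite.subset
        (Set.Finite.biUnion (Finset.finite_toSet _)
          (fun p _ => h p)) hsub
    obtain ⟨⟨w, w'⟩, hp⟩ := hfib
    obtain ⟨i0, hi0S, hi0e⟩ := hp.nonempty
    have hwF : w ∈ F := by
      have := hi0S.2
      rw [((Prod.mk.injEq _ _ _ _).mp hi0e).1] at this
      exact this
    have hw'F : w' ∉ F' := by
      have := hc i0 hi0S.1
      rw [((Prod.mk.injEq _ _ _ _).mp hi0e).2] at this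
      exact this
    have hvmem : (FVtx.pair w w' : FVtx W W') ∈
        InfinitelyOften (playOf wseq w'seq Tseq T'seq) ∩ prio F F' ⁻¹' {1} := by
      constructor
      · intro M
        obtain ⟨i, ⟨hiS, hie⟩, hiM⟩ := hp.exists_gt M
        refine ⟨4 * i, by omega, ?_⟩
        have h0 : playOf wseq w'seq Tseq T'seq (4 * i)
            = FVtx.pair (wseq i) (w'seq i) := by
          simp [playOf, Nat.mul_mod_right, Nat.mul_div_cancel_left]
        rw [h0]
        obtain ⟨h1, h2⟩ := (Prod.mk.injEq _ _ _ _).mp hie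
        rw [h1, h2]
      · simp [prio, hwF, hw'F]
    rw [hemp] at hvmem
    exact hvmem
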